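/- Let r > 0 and q ∈ (0,1), and let p(k) = (Γ(k + r) / (Γ(r)·k!))·q^r·(1 − q)^k be the negative binomial probability mass function with number of successes r and success probability q. Then for every k ∈ ℕ, as u → ∞ along the positive integers, p(u + k) / ∑_{i=0}^{∞} p(u + i) → q·(1 − q)^k. That is, the conditional exceedance distribution of a negative binomial random variable above a high integer threshold converges to the geometric distribution with success probability q. -/

import Mathlib

open Filter

/-- For the negative binomial probability mass function
`p(k) = (Γ(k+r)/(Γ(r)·k!))·q^r·(1-q)^k` with `r > 0` and `q ∈ (0,1)`, the conditional
exceedance distribution above a high integer threshold converges to the geometric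
distribution with success probability `q`: for every `k ∈ ℕ`,
`p(u+k)/∑_{i=0}^∞ p(u+i) → q·(1-q)^k` as `u → ∞` over the positive integers. -/
theorem negBinomial_exceedances_tendsto_geometric
    (r q : ℝ) (hr : 0 < r) (hq0 : 0 < q) (hq1 : q < 1) (p : ℕ → ℝ)
    (hp : ∀ k : ℕ, p k = Real.Gamma ((k : ℝ) + r) / (Real.Gamma r * (k.factorial : ℝ))
      * q ^ r * (1 - q) ^ k) :
    ∀ k : ℕ, Filter.Tendsto (fun u : ℕ => p (u + k) / ∑' i : ℕ, p (u + i))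
      Filter.atTop (nhds (q * (1 - q) ^ k)) := by
  have h1q : (0:ℝ) < 1 - q := by linarith
  -- positivity of p
  have hppos : ∀ n : ℕ, 0 < p n := by
    intro n
    rw [hp n]
    have h1 : 0 < Real.Gamma ((n:ℝ) + r) :=
      Real.Gamma_pos_of_pos (by positivity)
    have h2 : 0 < Real.Gamma r := Real.Gamma_pos_of_pos hr
    have h3 : 0 < (q : ℝ) ^ r := Real.rpow_pos_of_pos hq0 r
    positivity
  -- ratio formula
  have hratio : ∀ n : ℕ, p (n + 1) = p n * (((n:ℝ) + r) / ((n:ℝ) + 1) * (1 - q)) := by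
    intro n
    have hG : Real.Gamma (((n:ℝ) + 1) + r) = ((n:ℝ) + r) * Real.Gamma ((n:ℝ) + r) := by
      have h : ((n:ℝ) + 1) + r = ((n:ℝ) + r) + 1 := by ring
      rw [h, Real.Gamma_add_one (by positivity)]
    rw [hp (n+1), hp n]
    push_cast
    rw [hG, Nat.factorial_succ]
    have hf : (0:ℝ) < (n.factorial : ℝ) := by exact_mod_cast n.factorial_pos
    have hΓ : (0:ℝ) < Real.Gamma r := Real.Gamma_pos_of_pos hr
    push_cast
    field_simp
    ring
  -- product formula
  set G : ℕ → ℕ → ℝ := fun u i =>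
    ∏ j ∈ Finset.range i, (((u:ℝ) + j + r) / ((u:ℝ) + j + 1) * (1 - q)) with hG_def
  have hprod : ∀ u i : ℕ, p (u + i) = p u * G u i := by
    intro u i
    induction i with
    | zero => simp [hG_def]
    | succ i ih =>
      have h : u + (i + 1) = (u + i) + 1 := by ring
      have hGsucc : G u (i+1) = G u i * (((u:ℝ) + i + r) / ((u:ℝ) + i + 1) * (1 - q)) := by
        simp only [hG_def]
        rw [Finset.prod_range_succ]
      rw [h, hratio (u + i), ih, hGsucc]
      push_cast
      ring
  have hGpos : ∀ u i : ℕ, 0 < G u i := by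
    intro u i
    refine Finset.prod_pos fun j _ => ?_
    have : (0:ℝ) < (u:ℝ) + j + r := by positivity
    have : (0:ℝ) < (u:ℝ) + j + 1 := by positivity
    positivity
  -- pointwise convergence of G · i to (1-q)^i
  have hGtend : ∀ i : ℕ, Tendsto (fun u : ℕ => G u i) atTop (nhds ((1 - q) ^ i)) := by
    intro i
    have h : ((1 - q : ℝ)) ^ i = ∏ j ∈ Finset.range i, (1 * (1 - q)) := by
      simp
    rw [h]
    refine tendsto_finset_prod _ fun j _ => ?_
    refine Tendsto.mul_const _ ?_
    -- (u + j + r)/(u + j + 1) → 1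
    have key : Tendsto (fun u : ℕ => ((u:ℝ) + j + r) / ((u:ℝ) + j + 1)) atTop (nhds 1) := by
      have h2 : Tendsto (fun u : ℕ => 1 + (r - 1) / ((u:ℝ) + j + 1)) atTop (nhds (1 + 0)) := by
        refine Tendsto.const_add _ ?_
        refine Tendsto.div_atTop tendsto_const_nhds ?_
        have : Tendsto (fun u : ℕ => (u:ℝ)) atTop atTop := tendsto_natCast_atTop_atTop
        exact tendsto_atTop_add_const_right _ _ (tendsto_atTop_add_const_right _ _ this)
      rw [show (1:ℝ) = 1 + 0 by ring]
      refine h2.congr fun u => ?_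
      have hpos : (0:ℝ) < (u:ℝ) + j + 1 := by positivity
      field_simp
      ring
    exact key
  -- bound: choose s and U
  set s : ℝ := 1 - q / 2 with hs_def
  have hs1 : s < 1 := by simp [hs_def]; linarith
  have hspos : 0 < s := by simp [hs_def]; linarith
  have hsq : 1 - q < s := by simp [hs_def]; linarith
  obtain ⟨U, hU⟩ := exists_nat_gt ((r + 1) * (1 - q) / (s - (1 - q)))
  have hbound : ∀ u : ℕ, U ≤ u → ∀ i : ℕ, G u i ≤ s ^ i := by
    intro u hu i
    have hfac : ∀ j : ℕ, ((u:ℝ) + j + r) / ((u:ℝ) + j + 1) * (1 - q) ≤ s := by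
      intro j
      have hpos : (0:ℝ) < (u:ℝ) + j + 1 := by positivity
      rw [div_mul_eq_mul_div, div_le_iff₀ hpos]
      have huU : (U:ℝ) ≤ (u:ℝ) := by exact_mod_cast hu
      have hjnn : (0:ℝ) ≤ (j:ℝ) := Nat.cast_nonneg j
      have hden : (0:ℝ) < s - (1 - q) := by linarith
      have hU' : (r + 1) * (1 - q) < (U:ℝ) * (s - (1 - q)) := by
        rw [div_lt_iff₀ hden] at hU
        linarith
      nlinarith [mul_nonneg hjnn hden.le, mul_nonneg (sub_nonneg.mpr huU) hden.le]
    have h2 : G u i ≤ ∏ _j ∈ Finset.range i, s := by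
      refine Finset.prod_le_prod (fun j _ => ?_) (fun j _ => hfac j)
      have h3 : (0:ℝ) < (u:ℝ) + j + r := by positivity
      have h4 : (0:ℝ) < (u:ℝ) + j + 1 := by positivity
      positivity
    simpa [Finset.prod_const, Finset.card_range] using h2
  -- convergence of the tsum of G
  have hSum : Summable (fun i : ℕ => s ^ i) := summable_geometric_of_lt_one hspos.le hs1
  have hStend : Tendsto (fun u : ℕ => ∑' i : ℕ, G u i) atTop (nhds (∑' i : ℕ, (1 - q) ^ i)) := by
    refine tendsto_tsum_of_dominated_convergence hSum hGtend ?_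
    filter_upwards [eventually_ge_atTop U] with u hu i
    rw [Real.norm_eq_abs, abs_of_pos (hGpos u i)]
    exact hbound u hu i
  have htsum_geom : ∑' i : ℕ, (1 - q) ^ i = q⁻¹ := by
    rw [tsum_geometric_of_lt_one h1q.le (by linarith)]
    congr 1
    ring
  rw [htsum_geom] at hStend
  -- main
  intro k
  have hnum : Tendsto (fun u : ℕ => G u k) atTop (nhds ((1 - q) ^ k)) := hGtend k
  have hdiv : Tendsto (fun u : ℕ => G u k / ∑' i : ℕ, G u i) atTop
      (nhds ((1 - q) ^ k / q⁻¹)) := hnum.div hStend (by positivity)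
  have hfinal : ((1 - q) ^ k) / q⁻¹ = q * (1 - q) ^ k := by
    field_simp
  rw [hfinal] at hdiv
  refine hdiv.congr fun u => ?_
  have hpu : p u ≠ 0 := (hppos u).ne'
  have hts : ∑' i : ℕ, p (u + i) = p u * ∑' i : ℕ, G u i := by
    rw [← tsum_mul_left]
    exact tsum_congr fun i => hprod u i
  rw [hprod u k, hts, mul_div_mul_left _ _ hpu]
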